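/- Define S(n,m) = Σ_{(m_0,…,m_n)} (−1)^{ε(m_*)} and S'(n,m) = Σ_{(m_0,…,m_n)} (−1)^{m_0 + ε(m_*)}, where the sums range over all (n+1)-tuples of nonnegative integers with m_0+⋯+m_n = m. Then for all integers j ≥ 1 and k ≥ 1: S(2j, 2k) = C(j+k, j); S(2j, 2k−1) = C(j+k−1, j); S(2j−1, 2k) = C(j+k−1, k); S(2j−1, 2k−1) = 0; S'(2j, 2k) = C(j+k, j); S'(2j, 2k−1) = −C(j+k−1, j); S'(2j−1, 2k) = 2·C(j+k, k) − C(j+k−1, k); and S'(2j−1, 2k−1) = 2·C(j+k−1, j). Here C(a,b) denotes the binomial coefficient. -/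

import Mathlib

open Finset

/-- `eps n v = v (n-1) + v (n-3) + ⋯`: the exponent of the sign of the
shuffle encoded by the tuple `v = (m_0, …, m_n)`. -/
def eps (n : ℕ) (v : Fin (n+1) → ℕ) : ℕ :=
  ∑ t ∈ Finset.range ((n+1)/2), v ⟨n - 1 - 2*t, by omega⟩

/-- `psumV n v i = v 0 + v 1 + ⋯ + v (i-1)`. -/
def psumV (n : ℕ) (v : Fin (n+1) → ℕ) (i : ℕ) : ℕ :=
  ∑ t : Fin (n+1), if (t : ℕ) < i then v t else 0

/-- `S(n,m) = Σ (-1)^{ε(m_*)}` over all `(n+1)`-tuples summing to `m`. -/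
def Ssum (n m : ℕ) : ℤ :=
  ∑ v ∈ Finset.Nat.antidiagonalTuple (n+1) m, (-1 : ℤ) ^ eps n v

/-- `S'(n,m) = Σ (-1)^{m_0 + ε(m_*)}` over all `(n+1)`-tuples summing to `m`. -/
def S'sum (n m : ℕ) : ℤ :=
  ∑ v ∈ Finset.Nat.antidiagonalTuple (n+1) m, (-1 : ℤ) ^ (v 0 + eps n v)

lemma sum_adt_succ (n m : ℕ) (f : (Fin (n+2) → ℕ) → ℤ) :
    ∑ v ∈ Finset.Nat.antidiagonalTuple (n+2) m, f v
      = ∑ ab ∈ Finset.HasAntidiagonal.antidiagonal m, ∑ w ∈ Finset.Nat.antidiagonalTuple (n+1) ab.2,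
          f (Fin.cons ab.1 w) := by
  have hset : Finset.Nat.antidiagonalTuple (n+2) m
      = (Finset.HasAntidiagonal.antidiagonal m).biUnion
          (fun ab => (Finset.Nat.antidiagonalTuple (n+1) ab.2).image (Fin.cons ab.1)) := by
    ext v
    simp only [Finset.Nat.mem_antidiagonalTuple, Finset.mem_biUnion, Finset.mem_image,
      Finset.HasAntidiagonal.mem_antidiagonal, Prod.exists]
    constructor
    · intro h
      refine ⟨v 0, ∑ i, Fin.tail v i, ?_, Fin.tail v, ?_, Fin.cons_self_tail v⟩
      · rw [← h, ← Fin.sum_cons (v 0) (Fin.tail v), Fin.cons_self_tail]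
      · rfl
    · rintro ⟨a, b, hab, w, hw, rfl⟩
      rw [Fin.sum_cons]; omega
  rw [hset, Finset.sum_biUnion]
  · refine Finset.sum_congr rfl fun ab _ => ?_
    rw [Finset.sum_image]
    intro x _ y _ h
    exact (Fin.cons_right_injective _) h
  · intro ab hab ab' hab' hne
    simp only [Finset.mem_coe, Finset.HasAntidiagonal.mem_antidiagonal] at hab hab'
    have ha : ab.1 ≠ ab'.1 := by
      intro h; apply hne; ext <;> omega
    simp only [Function.onFun, Finset.disjoint_left, Finset.mem_image]
    rintro v ⟨w, _, rfl⟩ ⟨w', _, h⟩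
    exact ha (by simpa using congrFun h.symm 0)

lemma eps_cons_odd (n : ℕ) (hn : n % 2 = 1) (a : ℕ) (v : Fin (n+1) → ℕ) :
    eps (n+1) (Fin.cons a v) = eps n v := by
  unfold eps
  have h2 : (n+1+1)/2 = (n+1)/2 := by omega
  rw [h2]
  refine Finset.sum_congr rfl fun t ht => ?_
  simp only [Finset.mem_range] at ht
  have hidx : (⟨n + 1 - 1 - 2*t, by omega⟩ : Fin (n+2))
      = Fin.succ ⟨n - 1 - 2*t, by omega⟩ := by
    apply Fin.ext
    simp only [Fin.val_succ]
    omega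
  rw [hidx, Fin.cons_succ]

lemma eps_cons_even (n : ℕ) (hn : n % 2 = 0) (a : ℕ) (v : Fin (n+1) → ℕ) :
    eps (n+1) (Fin.cons a v) = a + eps n v := by
  unfold eps
  have h2 : (n+1+1)/2 = (n+1)/2 + 1 := by omega
  rw [h2, Finset.sum_range_succ]
  have hlast : (⟨n + 1 - 1 - 2*((n+1)/2), by omega⟩ : Fin (n+2)) = 0 := by
    apply Fin.ext
    simp only [Fin.val_zero]
    omega
  rw [hlast, Fin.cons_zero, add_comm]
  congr 1
  refine Finset.sum_congr rfl fun t ht => ?_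
  simp only [Finset.mem_range] at ht
  have hidx : (⟨n + 1 - 1 - 2*t, by omega⟩ : Fin (n+2))
      = Fin.succ ⟨n - 1 - 2*t, by omega⟩ := by
    apply Fin.ext
    simp only [Fin.val_succ]
    omega
  rw [hidx, Fin.cons_succ]

lemma Ssum_succ_odd (n m : ℕ) (hn : n % 2 = 1) :
    Ssum (n+1) m = ∑ ab ∈ Finset.HasAntidiagonal.antidiagonal m, Ssum n ab.2 := by
  unfold Ssum
  rw [sum_adt_succ]
  refine Finset.sum_congr rfl fun ab _ => Finset.sum_congr rfl fun w _ => ?_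
  rw [eps_cons_odd n hn]

lemma Ssum_succ_even (n m : ℕ) (hn : n % 2 = 0) :
    Ssum (n+1) m = ∑ ab ∈ Finset.HasAntidiagonal.antidiagonal m, (-1:ℤ)^ab.1 * Ssum n ab.2 := by
  unfold Ssum
  rw [sum_adt_succ]
  refine Finset.sum_congr rfl fun ab _ => ?_
  rw [Finset.mul_sum]
  refine Finset.sum_congr rfl fun w _ => ?_
  rw [eps_cons_even n hn, pow_add]

lemma S'sum_succ_odd (n m : ℕ) (hn : n % 2 = 1) :
    S'sum (n+1) m = ∑ ab ∈ Finset.HasAntidiagonal.antidiagonal m, (-1:ℤ)^ab.1 * Ssum n ab.2 := by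
  unfold S'sum Ssum
  rw [sum_adt_succ]
  refine Finset.sum_congr rfl fun ab _ => ?_
  rw [Finset.mul_sum]
  refine Finset.sum_congr rfl fun w _ => ?_
  rw [eps_cons_odd n hn, Fin.cons_zero, pow_add]

lemma S'sum_succ_even (n m : ℕ) (hn : n % 2 = 0) :
    S'sum (n+1) m = ∑ ab ∈ Finset.HasAntidiagonal.antidiagonal m, Ssum n ab.2 := by
  unfold S'sum Ssum
  rw [sum_adt_succ]
  refine Finset.sum_congr rfl fun ab _ => Finset.sum_congr rfl fun w _ => ?_
  rw [eps_cons_even n hn, Fin.cons_zero]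
  have : ab.1 + (ab.1 + eps n w) = 2*ab.1 + eps n w := by ring
  rw [this, pow_add, pow_mul]
  norm_num

lemma Ssum_zero (m : ℕ) : Ssum 0 m = 1 := by
  unfold Ssum eps
  rw [Finset.Nat.antidiagonalTuple_one]
  simp




lemma sum_antidiagonal_snd (m : ℕ) (g : ℕ × ℕ → ℤ) :
    ∑ ab ∈ Finset.HasAntidiagonal.antidiagonal m, g ab = ∑ k ∈ Finset.range (m+1), g (m-k, k) := by
  rw [Finset.Nat.sum_antidiagonal_eq_sum_range_succ_mk, ← Finset.sum_range_reflect]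
  refine Finset.sum_congr rfl fun k hk => ?_
  simp only [Finset.mem_range] at hk
  congr 1
  have h1 : m + 1 - 1 - k = m - k := by omega
  rw [h1]
  have h2 : m - (m - k) = k := by omega
  rw [h2]

lemma idA (j m : ℕ) :
    ∑ k ∈ Finset.range (m+1), (-1:ℤ)^(m-k) * ((j + k/2).choose j : ℤ)
      = if m % 2 = 0 then ((j + m/2).choose j : ℤ) else 0 := by
  induction m with
  | zero => simp
  | succ m ih =>
    rw [Finset.sum_range_succ]
    have h1 : ∑ k ∈ Finset.range (m+1), (-1:ℤ)^(m+1-k) * ((j + k/2).choose j : ℤ)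
        = -∑ k ∈ Finset.range (m+1), (-1:ℤ)^(m-k) * ((j + k/2).choose j : ℤ) := by
      rw [← Finset.sum_neg_distrib]
      refine Finset.sum_congr rfl fun k hk => ?_
      simp only [Finset.mem_range] at hk
      have h2 : m+1-k = (m-k)+1 := by omega
      rw [h2, pow_succ]; ring
    rw [h1, ih, Nat.sub_self, pow_zero, one_mul]
    rcases Nat.even_or_odd m with he | ho
    · have hm : m % 2 = 0 := Nat.even_iff.mp he
      have hd : (m+1)/2 = m/2 := by omega
      simp [hm, show ¬((m+1) % 2 = 0) by omega, hd]
    · have hm : m % 2 = 1 := Nat.odd_iff.mp ho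
      simp [show ¬(m % 2 = 0) by omega, show (m+1) % 2 = 0 by omega]

lemma pascalN (n r : ℕ) : (n+1).choose (r+1) = n.choose r + n.choose (r+1) := rfl

lemma pascal1 (j s : ℕ) :
    ((j+1+s).choose (j+1) : ℤ) + ((j+(s+1)).choose j : ℤ) = ((j+1+(s+1)).choose (j+1) : ℤ) := by
  have h := pascalN (j+s+1) j
  have e3 : j+1+(s+1) = (j+s+1)+1 := by omega
  have e4 : j+1+s = j+s+1 := by omega
  have e5 : j+(s+1) = j+s+1 := by omega
  rw [e3, e4, e5, h]
  push_cast; ring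

lemma idB (j m : ℕ) :
    ∑ k ∈ Finset.range (m+1), (if k % 2 = 0 then ((j + k/2).choose j : ℤ) else 0)
      = ((j+1 + m/2).choose (j+1) : ℤ) := by
  induction m with
  | zero => simp
  | succ m ih =>
    rw [Finset.sum_range_succ, ih]
    rcases Nat.even_or_odd m with he | ho
    · have hm : m % 2 = 0 := Nat.even_iff.mp he
      have hd : (m+1)/2 = m/2 := by omega
      simp [show ¬((m+1) % 2 = 0) by omega, hd]
    · have hm : m % 2 = 1 := Nat.odd_iff.mp ho
      obtain ⟨s, rfl⟩ : ∃ s, m = 2*s+1 := ⟨m/2, by omega⟩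
      have e1 : (2*s+1)/2 = s := by omega
      have e2 : (2*s+1+1)/2 = s+1 := by omega
      have e3 : (2*s+1+1) % 2 = 0 := by omega
      rw [e1, e2, if_pos e3]
      exact pascal1 j s

lemma idC (j m : ℕ) :
    ∑ k ∈ Finset.range (m+1), (-1:ℤ)^(m-k) * (if k % 2 = 0 then ((j + k/2).choose j : ℤ) else 0)
      = (-1:ℤ)^m * ((j+1 + m/2).choose (j+1) : ℤ) := by
  induction m with
  | zero => simp
  | succ m ih =>
    rw [Finset.sum_range_succ]
    have h1 : ∑ k ∈ Finset.range (m+1),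
          (-1:ℤ)^(m+1-k) * (if k % 2 = 0 then ((j + k/2).choose j : ℤ) else 0)
        = -∑ k ∈ Finset.range (m+1),
            (-1:ℤ)^(m-k) * (if k % 2 = 0 then ((j + k/2).choose j : ℤ) else 0) := by
      rw [← Finset.sum_neg_distrib]
      refine Finset.sum_congr rfl fun k hk => ?_
      simp only [Finset.mem_range] at hk
      have h2 : m+1-k = (m-k)+1 := by omega
      rw [h2, pow_succ]; ring
    rw [h1, ih, Nat.sub_self, pow_zero, one_mul]
    rcases Nat.even_or_odd m with he | ho
    · have hm : m % 2 = 0 := Nat.even_iff.mp he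
      have hd : (m+1)/2 = m/2 := by omega
      rw [if_neg (show ¬((m+1) % 2 = 0) by omega), hd, pow_succ]
      ring
    · have hm : m % 2 = 1 := Nat.odd_iff.mp ho
      obtain ⟨s, rfl⟩ : ∃ s, m = 2*s+1 := ⟨m/2, by omega⟩
      have e1 : (2*s+1)/2 = s := by omega
      have e2 : (2*s+1+1)/2 = s+1 := by omega
      have hp : (-1:ℤ)^(2*s+1) = -1 := by
        rw [pow_succ, pow_mul]; norm_num
      have hp1 : (-1:ℤ)^(2*s+1+1) = 1 := by
        rw [pow_succ, hp]; norm_num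
      rw [e1, e2, if_pos (show (2*s+1+1) % 2 = 0 by omega), hp, hp1]
      have := pascal1 j s
      linarith

lemma idD (j m : ℕ) :
    ∑ k ∈ Finset.range (m+1), ((j + k/2).choose j : ℤ)
      = ((j+1 + m/2).choose (j+1) : ℤ) + ((j + (m+1)/2).choose (j+1) : ℤ) := by
  induction m with
  | zero => simp [Nat.choose_succ_self]
  | succ m ih =>
    rw [Finset.sum_range_succ, ih]
    rcases Nat.even_or_odd m with he | ho
    · have hm : m % 2 = 0 := Nat.even_iff.mp he
      obtain ⟨s, rfl⟩ : ∃ s, m = 2*s := ⟨m/2, by omega⟩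
      have e1 : (2*s)/2 = s := by omega
      have e2 : (2*s+1)/2 = s := by omega
      have e3 : (2*s+1+1)/2 = s+1 := by omega
      rw [e1, e2, e3]
      have hn : ((j+s).choose (j+1) : ℤ) + ((j+s).choose j : ℤ) = ((j+(s+1)).choose (j+1) : ℤ) := by
        have h2 := pascalN (j+s) j
        have e4 : j+(s+1) = (j+s)+1 := by omega
        rw [e4, h2]
        push_cast; ring
      linarith
    · have hm : m % 2 = 1 := Nat.odd_iff.mp ho
      obtain ⟨s, rfl⟩ : ∃ s, m = 2*s+1 := ⟨m/2, by omega⟩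
      have e1 : (2*s+1)/2 = s := by omega
      have e2 : (2*s+1+1)/2 = s+1 := by omega
      have e3 : (2*s+1+1+1)/2 = s+1 := by omega
      rw [e1, e2, e3]
      have := pascal1 j s
      linarith

lemma SO_of_SE (j : ℕ) (hSE : ∀ m, Ssum (2*j) m = ((j + m/2).choose j : ℤ)) :
    ∀ m, Ssum (2*j+1) m = if m % 2 = 0 then ((j + m/2).choose j : ℤ) else 0 := by
  intro m
  rw [Ssum_succ_even (2*j) m (by omega), sum_antidiagonal_snd]
  refine Eq.trans (Finset.sum_congr rfl fun k _ => ?_) (idA j m)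
  dsimp only
  rw [hSE]

lemma SE : ∀ j, ∀ m, Ssum (2*j) m = ((j + m/2).choose j : ℤ) := by
  intro j
  induction j with
  | zero => intro m; norm_num [Ssum_zero]
  | succ j ih =>
    intro m
    rw [show 2*(j+1) = (2*j+1)+1 by ring, Ssum_succ_odd (2*j+1) m (by omega),
      sum_antidiagonal_snd]
    refine Eq.trans (Finset.sum_congr rfl fun k _ => ?_) (idB j m)
    dsimp only
    rw [SO_of_SE j ih]

lemma SO (j m : ℕ) : Ssum (2*j+1) m = if m % 2 = 0 then ((j + m/2).choose j : ℤ) else 0 :=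
  SO_of_SE j (SE j) m

lemma S'E (j m : ℕ) : S'sum (2*(j+1)) m = (-1:ℤ)^m * ((j+1 + m/2).choose (j+1) : ℤ) := by
  rw [show 2*(j+1) = (2*j+1)+1 by ring, S'sum_succ_odd (2*j+1) m (by omega),
    sum_antidiagonal_snd]
  refine Eq.trans (Finset.sum_congr rfl fun k _ => ?_) (idC j m)
  dsimp only
  rw [SO]

lemma S'O (j m : ℕ) : S'sum (2*j+1) m
    = ((j+1 + m/2).choose (j+1) : ℤ) + ((j + (m+1)/2).choose (j+1) : ℤ) := by
  rw [S'sum_succ_even (2*j) m (by omega), sum_antidiagonal_snd]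
  refine Eq.trans (Finset.sum_congr rfl fun k _ => ?_) (idD j m)
  dsimp only
  rw [SE]

theorem stmt3 (j k : ℕ) (hj : 1 ≤ j) (hk : 1 ≤ k) :
    Ssum (2*j) (2*k) = ((j+k).choose j : ℤ) ∧
    Ssum (2*j) (2*k-1) = ((j+k-1).choose j : ℤ) ∧
    Ssum (2*j-1) (2*k) = ((j+k-1).choose k : ℤ) ∧
    Ssum (2*j-1) (2*k-1) = 0 ∧
    S'sum (2*j) (2*k) = ((j+k).choose j : ℤ) ∧
    S'sum (2*j) (2*k-1) = -((j+k-1).choose j : ℤ) ∧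
    S'sum (2*j-1) (2*k) = 2*((j+k).choose k : ℤ) - ((j+k-1).choose k : ℤ) ∧
    S'sum (2*j-1) (2*k-1) = 2*((j+k-1).choose j : ℤ) := by
  -- frequently used choose facts
  have hsym1 : (j+k-1).choose (j-1) = (j+k-1).choose k := by
    have h := Nat.choose_symm (show k ≤ j+k-1 by omega)
    rwa [show j+k-1-k = j-1 by omega] at h
  have hsym2 : (j+k).choose k = (j+k).choose j := by
    have h := Nat.choose_symm (show j ≤ j+k by omega)
    rwa [show j+k-j = k by omega] at h
  have hsym3 : (j+k-1).choose (k-1) = (j+k-1).choose j := by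
    have h := Nat.choose_symm (show j ≤ j+k-1 by omega)
    rwa [show j+k-1-j = k-1 by omega] at h
  refine ⟨?_, ?_, ?_, ?_, ?_, ?_, ?_, ?_⟩
  · rw [SE j (2*k), show j + 2*k/2 = j+k by omega]
  · rw [SE j (2*k-1), show j + (2*k-1)/2 = j+k-1 by omega]
  · rw [show 2*j-1 = 2*(j-1)+1 by omega, SO (j-1) (2*k),
      if_pos (show 2*k % 2 = 0 by omega), show j-1 + 2*k/2 = j+k-1 by omega]
    exact_mod_cast hsym1
  · rw [show 2*j-1 = 2*(j-1)+1 by omega, SO (j-1) (2*k-1),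
      if_neg (show ¬((2*k-1) % 2 = 0) by omega)]
  · rw [show 2*j = 2*((j-1)+1) by omega, S'E (j-1) (2*k),
      show (-1:ℤ)^(2*k) = 1 by rw [pow_mul]; norm_num,
      show j-1+1 + 2*k/2 = j+k by omega, show j-1+1 = j by omega, one_mul]
  · rw [show 2*j = 2*((j-1)+1) by omega, S'E (j-1) (2*k-1),
      show (-1:ℤ)^(2*k-1) = -1 by
        rw [show 2*k-1 = 2*(k-1)+1 by omega, pow_succ, pow_mul]; norm_num,
      show j-1+1 + (2*k-1)/2 = j+k-1 by omega, show j-1+1 = j by omega]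
    ring
  · rw [show 2*j-1 = 2*(j-1)+1 by omega, S'O (j-1) (2*k),
      show j-1+1 + 2*k/2 = j+k by omega, show j-1 + (2*k+1)/2 = j+k-1 by omega,
      show j-1+1 = j by omega]
    -- ⊢ C(j+k,j) + C(j+k-1,j) = 2*C(j+k,k) - C(j+k-1,k)
    have hp : (j+k).choose k = (j+k-1).choose (k-1) + (j+k-1).choose k := by
      have h : (j+k-1+1).choose (k-1+1) = (j+k-1).choose (k-1) + (j+k-1).choose (k-1+1) := rfl
      rwa [show j+k-1+1 = j+k by omega, show k-1+1 = k by omega] at h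
    have h1 : ((j+k).choose j : ℤ) = ((j+k).choose k : ℤ) := by exact_mod_cast hsym2.symm
    have h2 : ((j+k-1).choose j : ℤ) = ((j+k-1).choose (k-1) : ℤ) := by exact_mod_cast hsym3.symm
    have h3 : ((j+k).choose k : ℤ) = ((j+k-1).choose (k-1) : ℤ) + ((j+k-1).choose k : ℤ) := by
      exact_mod_cast hp
    linarith
  · rw [show 2*j-1 = 2*(j-1)+1 by omega, S'O (j-1) (2*k-1),
      show j-1+1 + (2*k-1)/2 = j+k-1 by omega, show j-1 + (2*k-1+1)/2 = j+k-1 by omega,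
      show j-1+1 = j by omega]
    ring
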